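/- The regular nonlinearity becomes exactly gauge equivariant in the limit of infinitely many samples: with the band limits B, B', the coefficients x₀, x_α, x_β, the nonlinearity f, and δ ∈ [0, 1] held fixed, the total ℓ¹ equivariance error E(N) = |z₀^{FT} − z₀^{TF}| + Σ_{m=1}^{B'} ( |z_α^{FT}(m) − z_α^{TF}(m)| + |z_β^{FT}(m) − z_β^{TF}(m)| ), viewed as a function of the number of samples N, tends to 0 as N → ∞. -/

import Mathlib

open Finset Real Filter

private lemma lipsin : LipschitzWith 1 Real.sin :=
  lipschitzWith_of_nnnorm_deriv_le Real.differentiable_sin (fun x => by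
    rw [Real.deriv_sin]
    simpa [← NNReal.coe_le_coe, Real.norm_eq_abs] using Real.abs_cos_le_one x)

private lemma lipcos : LipschitzWith 1 Real.cos :=
  lipschitzWith_of_nnnorm_deriv_le Real.differentiable_cos (fun x => by
    rw [Real.deriv_cos']
    simpa [← NNReal.coe_le_coe, Real.norm_eq_abs] using Real.abs_sin_le_one x)

private lemma prod_diff_bound (w : ℝ → ℝ) (hw1 : LipschitzWith 1 w) (hwb : ∀ x : ℝ, |w x| ≤ 1)
    (a b u v My : ℝ) (hu : |u| ≤ My) :
    |w a * u - w b * v| ≤ My * |a - b| + |u - v| := by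
  have h1 : |w a - w b| ≤ |a - b| := by
    have := hw1.dist_le_mul a b
    simpa [Real.dist_eq] using this
  have e : w a * u - w b * v = (w a - w b) * u + w b * (u - v) := by ring
  rw [e]
  calc |(w a - w b) * u + w b * (u - v)| ≤ |(w a - w b) * u| + |w b * (u - v)| := abs_add_le _ _
    _ = |w a - w b| * |u| + |w b| * |u - v| := by rw [abs_mul, abs_mul]
    _ ≤ |a - b| * My + 1 * |u - v| :=
        add_le_add (mul_le_mul h1 hu (abs_nonneg _) (abs_nonneg _))
          (mul_le_mul_of_nonneg_right (hwb b) (abs_nonneg _))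
    _ = My * |a - b| + |u - v| := by ring

private lemma sum_diff_abs_le (n : ℕ) (F G : ℕ → ℝ) (c : ℝ)
    (h : ∀ t ∈ Finset.range n, |F t - G t| ≤ c) :
    |∑ t ∈ Finset.range n, F t - ∑ t ∈ Finset.range n, G t| ≤ n * c := by
  rw [← Finset.sum_sub_distrib]
  calc |∑ t ∈ Finset.range n, (F t - G t)| ≤ ∑ t ∈ Finset.range n, |F t - G t| :=
        Finset.abs_sum_le_sum_abs _ _
    _ ≤ ∑ _t ∈ Finset.range n, c := Finset.sum_le_sum h
    _ = n * c := by simp [mul_comm]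

private lemma equivariance_bound (B' N : ℕ) (hN : 1 ≤ N) (δ : ℝ) (hδ0 : 0 ≤ δ) (hδ1 : δ ≤ 1)
    (Y : ℝ → ℝ) (My Ly : ℝ) (hMy : 0 ≤ My) (hLy : 0 ≤ Ly)
    (hYb : ∀ t : ℝ, |Y t| ≤ My)
    (hYl : ∀ t s : ℝ, |Y t - Y s| ≤ Ly / N * |t - s|) :
    |(1 / (N : ℝ)) * (∑ t ∈ Finset.range N, Y ((t : ℝ) + δ))
        - (1 / (N : ℝ)) * (∑ t ∈ Finset.range N, Y (t : ℝ))|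
      + ∑ m ∈ Finset.Icc 1 B',
          (|(2 / (N : ℝ)) * (∑ t ∈ Finset.range N,
                Real.cos (2 * Real.pi * m * t / N) * Y ((t : ℝ) + δ))
            - (2 / (N : ℝ)) * (∑ t ∈ Finset.range N,
                Real.cos (2 * Real.pi * m * ((t : ℝ) - δ) / N) * Y t)|
          + |(2 / (N : ℝ)) * (∑ t ∈ Finset.range N,
                Real.sin (2 * Real.pi * m * t / N) * Y ((t : ℝ) + δ))
            - (2 / (N : ℝ)) * (∑ t ∈ Finset.range N,
                Real.sin (2 * Real.pi * m * ((t : ℝ) - δ) / N) * Y t)|)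
      ≤ (Ly + ∑ m ∈ Finset.Icc 1 B', 4 * (2 * Real.pi * (m : ℝ) * My + Ly)) / N := by
  have hNpos : (0:ℝ) < N := by exact_mod_cast hN
  have hNne : (N:ℝ) ≠ 0 := ne_of_gt hNpos
  -- difference of Y at shifted points
  have hYd : ∀ t : ℝ, |Y (t + δ) - Y t| ≤ Ly / N := by
    intro t
    calc |Y (t + δ) - Y t| ≤ Ly / N * |t + δ - t| := hYl _ _
      _ = Ly / N * δ := by rw [show t + δ - t = δ by ring, abs_of_nonneg hδ0]
      _ ≤ Ly / N * 1 := by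
          apply mul_le_mul_of_nonneg_left hδ1 (by positivity)
      _ = Ly / N := mul_one _
  -- generic trig-coefficient term bound
  have hterm : ∀ (w : ℝ → ℝ), LipschitzWith 1 w → (∀ x : ℝ, |w x| ≤ 1) → ∀ m t : ℕ,
      |w (2 * Real.pi * m * t / N) * Y ((t : ℝ) + δ)
        - w (2 * Real.pi * m * ((t : ℝ) - δ) / N) * Y t|
        ≤ (2 * Real.pi * (m : ℝ) * My + Ly) / N := by
    intro w hw1 hwb m t
    have h1 := prod_diff_bound w hw1 hwb
      (2 * Real.pi * m * t / N) (2 * Real.pi * m * ((t : ℝ) - δ) / N)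
      (Y ((t : ℝ) + δ)) (Y t) My (hYb _)
    have hab : |2 * Real.pi * (m:ℝ) * t / N - 2 * Real.pi * m * ((t : ℝ) - δ) / N|
        ≤ 2 * Real.pi * (m:ℝ) / N := by
      have e : 2 * Real.pi * (m:ℝ) * t / N - 2 * Real.pi * m * ((t : ℝ) - δ) / N
          = 2 * Real.pi * (m:ℝ) * δ / N := by ring
      rw [e, abs_of_nonneg (by positivity)]
      have h2 : 2 * Real.pi * (m:ℝ) * δ ≤ 2 * Real.pi * (m:ℝ) :=
        mul_le_of_le_one_right (by positivity) hδ1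
      exact div_le_div_of_nonneg_right h2 hNpos.le
    calc |w (2 * Real.pi * m * t / N) * Y ((t : ℝ) + δ)
          - w (2 * Real.pi * m * ((t : ℝ) - δ) / N) * Y t|
        ≤ My * |2 * Real.pi * (m:ℝ) * t / N - 2 * Real.pi * m * ((t : ℝ) - δ) / N|
            + |Y ((t : ℝ) + δ) - Y t| := h1
      _ ≤ My * (2 * Real.pi * (m:ℝ) / N) + Ly / N :=
          add_le_add (mul_le_mul_of_nonneg_left hab hMy) (hYd _)
      _ = (2 * Real.pi * (m:ℝ) * My + Ly) / N := by ring
  -- coefficient sum bound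
  have hcoef : ∀ (w : ℝ → ℝ), LipschitzWith 1 w → (∀ x : ℝ, |w x| ≤ 1) → ∀ m : ℕ,
      |(2 / (N : ℝ)) * (∑ t ∈ Finset.range N, w (2 * Real.pi * m * t / N) * Y ((t : ℝ) + δ))
        - (2 / (N : ℝ)) * (∑ t ∈ Finset.range N,
            w (2 * Real.pi * m * ((t : ℝ) - δ) / N) * Y t)|
        ≤ 2 * (2 * Real.pi * (m : ℝ) * My + Ly) / N := by
    intro w hw1 hwb m
    rw [← mul_sub, abs_mul, abs_of_nonneg (by positivity : (0:ℝ) ≤ 2 / (N:ℝ))]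
    have hS := sum_diff_abs_le N
      (fun t => w (2 * Real.pi * m * t / N) * Y ((t : ℝ) + δ))
      (fun t => w (2 * Real.pi * m * ((t : ℝ) - δ) / N) * Y t)
      ((2 * Real.pi * (m : ℝ) * My + Ly) / N)
      (fun t _ => hterm w hw1 hwb m t)
    calc 2 / (N:ℝ) * |_| ≤ 2 / (N:ℝ) * ((N:ℝ) * ((2 * Real.pi * (m : ℝ) * My + Ly) / N)) :=
          mul_le_mul_of_nonneg_left hS (by positivity)
      _ = 2 * (2 * Real.pi * (m : ℝ) * My + Ly) / N := by field_simp
  -- z0 term bound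
  have h0 : |(1 / (N : ℝ)) * (∑ t ∈ Finset.range N, Y ((t : ℝ) + δ))
      - (1 / (N : ℝ)) * (∑ t ∈ Finset.range N, Y (t : ℝ))| ≤ Ly / N := by
    rw [← mul_sub, abs_mul, abs_of_nonneg (by positivity : (0:ℝ) ≤ 1 / (N:ℝ))]
    have hS := sum_diff_abs_le N (fun t => Y ((t : ℝ) + δ)) (fun t => Y (t : ℝ))
      (Ly / N) (fun t _ => hYd _)
    calc 1 / (N:ℝ) * |_| ≤ 1 / (N:ℝ) * ((N:ℝ) * (Ly / N)) :=
          mul_le_mul_of_nonneg_left hS (by positivity)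
      _ = Ly / N := by field_simp
  -- assemble
  rw [add_div, Finset.sum_div]
  refine add_le_add h0 (Finset.sum_le_sum fun m _ => ?_)
  have hc := hcoef Real.cos lipcos Real.abs_cos_le_one m
  have hs := hcoef Real.sin lipsin Real.abs_sin_le_one m
  calc _ ≤ 2 * (2 * Real.pi * (m : ℝ) * My + Ly) / N
        + 2 * (2 * Real.pi * (m : ℝ) * My + Ly) / N := add_le_add hc hs
    _ = 4 * (2 * Real.pi * (m : ℝ) * My + Ly) / N := by ring

private lemma trig_diff (w : ℝ → ℝ) (hw : LipschitzWith 1 w) (m N : ℕ) (hN : (0:ℝ) < N)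
    (t s : ℝ) :
    |w (2 * Real.pi * m * t / N) - w (2 * Real.pi * m * s / N)|
      ≤ 2 * Real.pi * (m:ℝ) / N * |t - s| := by
  have h1 : |w (2 * Real.pi * m * t / N) - w (2 * Real.pi * m * s / N)|
      ≤ |2 * Real.pi * (m:ℝ) * t / N - 2 * Real.pi * m * s / N| := by
    have := hw.dist_le_mul (2 * Real.pi * m * t / N) (2 * Real.pi * m * s / N)
    simpa [Real.dist_eq] using this
  refine h1.trans (le_of_eq ?_)
  have e : 2 * Real.pi * (m:ℝ) * t / N - 2 * Real.pi * m * s / N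
      = (2 * Real.pi * (m:ℝ) / N) * (t - s) := by ring
  rw [e, abs_mul, abs_of_nonneg (by positivity : (0:ℝ) ≤ 2 * Real.pi * (m:ℝ) / N)]

private lemma x_lip (B : ℕ) (x0 : ℝ) (xa xb : ℕ → ℝ) (N : ℕ) (hN : (0:ℝ) < N) (t s : ℝ) :
    |(x0 + ∑ m ∈ Finset.Icc 1 B, (xa m * Real.cos (2 * Real.pi * m * t / N)
        + xb m * Real.sin (2 * Real.pi * m * t / N)))
      - (x0 + ∑ m ∈ Finset.Icc 1 B, (xa m * Real.cos (2 * Real.pi * m * s / N)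
        + xb m * Real.sin (2 * Real.pi * m * s / N)))|
    ≤ (2 * Real.pi * ∑ m ∈ Finset.Icc 1 B, ((m:ℝ) * (|xa m| + |xb m|))) / N * |t - s| := by
  have e : (x0 + ∑ m ∈ Finset.Icc 1 B, (xa m * Real.cos (2 * Real.pi * m * t / N)
        + xb m * Real.sin (2 * Real.pi * m * t / N)))
      - (x0 + ∑ m ∈ Finset.Icc 1 B, (xa m * Real.cos (2 * Real.pi * m * s / N)
        + xb m * Real.sin (2 * Real.pi * m * s / N)))
      = ∑ m ∈ Finset.Icc 1 B,
          ((xa m * Real.cos (2 * Real.pi * m * t / N)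
            + xb m * Real.sin (2 * Real.pi * m * t / N))
          - (xa m * Real.cos (2 * Real.pi * m * s / N)
            + xb m * Real.sin (2 * Real.pi * m * s / N))) := by
    rw [Finset.sum_sub_distrib]; ring
  rw [e]
  calc |∑ m ∈ Finset.Icc 1 B, _| ≤ ∑ m ∈ Finset.Icc 1 B,
        |(xa m * Real.cos (2 * Real.pi * m * t / N)
            + xb m * Real.sin (2 * Real.pi * m * t / N))
          - (xa m * Real.cos (2 * Real.pi * m * s / N)
            + xb m * Real.sin (2 * Real.pi * m * s / N))| := Finset.abs_sum_le_sum_abs _ _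
    _ ≤ ∑ m ∈ Finset.Icc 1 B,
        2 * Real.pi * ((m:ℝ) * (|xa m| + |xb m|)) / N * |t - s| := by
      refine Finset.sum_le_sum fun m _ => ?_
      have e2 : (xa m * Real.cos (2 * Real.pi * m * t / N)
            + xb m * Real.sin (2 * Real.pi * m * t / N))
          - (xa m * Real.cos (2 * Real.pi * m * s / N)
            + xb m * Real.sin (2 * Real.pi * m * s / N))
          = xa m * (Real.cos (2 * Real.pi * m * t / N) - Real.cos (2 * Real.pi * m * s / N))
          + xb m * (Real.sin (2 * Real.pi * m * t / N) - Real.sin (2 * Real.pi * m * s / N)) := by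
        ring
      rw [e2]
      calc |_| ≤ |xa m * (Real.cos (2 * Real.pi * m * t / N) - Real.cos (2 * Real.pi * m * s / N))|
            + |xb m * (Real.sin (2 * Real.pi * m * t / N) - Real.sin (2 * Real.pi * m * s / N))| :=
            abs_add_le _ _
        _ ≤ |xa m| * (2 * Real.pi * (m:ℝ) / N * |t - s|)
            + |xb m| * (2 * Real.pi * (m:ℝ) / N * |t - s|) := by
            rw [abs_mul, abs_mul]
            exact add_le_add
              (mul_le_mul_of_nonneg_left (trig_diff _ lipcos m N hN t s) (abs_nonneg _))
              (mul_le_mul_of_nonneg_left (trig_diff _ lipsin m N hN t s) (abs_nonneg _))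
        _ = 2 * Real.pi * ((m:ℝ) * (|xa m| + |xb m|)) / N * |t - s| := by ring
    _ = (2 * Real.pi * ∑ m ∈ Finset.Icc 1 B, ((m:ℝ) * (|xa m| + |xb m|))) / N * |t - s| := by
      rw [Finset.mul_sum, Finset.sum_div, Finset.sum_mul]

private lemma x_bound (B : ℕ) (x0 : ℝ) (xa xb : ℕ → ℝ) (N : ℕ) (t : ℝ) :
    |x0 + ∑ m ∈ Finset.Icc 1 B, (xa m * Real.cos (2 * Real.pi * m * t / N)
        + xb m * Real.sin (2 * Real.pi * m * t / N))|
      ≤ |x0| + ∑ m ∈ Finset.Icc 1 B, (|xa m| + |xb m|) := by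
  refine (abs_add_le _ _).trans (add_le_add_right ?_ _)
  refine (Finset.abs_sum_le_sum_abs _ _).trans (Finset.sum_le_sum fun m _ => ?_)
  calc |xa m * Real.cos (2 * Real.pi * m * t / N) + xb m * Real.sin (2 * Real.pi * m * t / N)|
      ≤ |xa m * Real.cos (2 * Real.pi * m * t / N)|
        + |xb m * Real.sin (2 * Real.pi * m * t / N)| := abs_add_le _ _
    _ ≤ |xa m| * 1 + |xb m| * 1 := by
        rw [abs_mul, abs_mul]
        exact add_le_add
          (mul_le_mul_of_nonneg_left (Real.abs_cos_le_one _) (abs_nonneg _))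
          (mul_le_mul_of_nonneg_left (Real.abs_sin_le_one _) (abs_nonneg _))
    _ = |xa m| + |xb m| := by ring

theorem regular_nonlinearity_equivariant_in_limit
    (B B' : ℕ) (hB : 1 ≤ B) (hB' : 1 ≤ B')
    (x0 : ℝ) (xa xb : ℕ → ℝ)
    (f : ℝ → ℝ) (Lf : ℝ) (hLf : 0 ≤ Lf)
    (hf : ∀ a b : ℝ, |f a - f b| ≤ Lf * |a - b|) (hf0 : f 0 = 0)
    (δ : ℝ) (hδ0 : 0 ≤ δ) (hδ1 : δ ≤ 1) :
    Filter.Tendsto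
      (fun N : ℕ =>
        let x : ℝ → ℝ := fun t => x0 + ∑ m ∈ Finset.Icc 1 B,
          (xa m * Real.cos (2 * Real.pi * m * t / N)
            + xb m * Real.sin (2 * Real.pi * m * t / N));
        let y : ℝ → ℝ := fun t => f (x t);
        |(1 / (N : ℝ)) * (∑ t ∈ Finset.range N, y ((t : ℝ) + δ))
            - (1 / (N : ℝ)) * (∑ t ∈ Finset.range N, y (t : ℝ))|
          + ∑ m ∈ Finset.Icc 1 B',
              (|(2 / (N : ℝ)) * (∑ t ∈ Finset.range N,
                    Real.cos (2 * Real.pi * m * t / N) * y ((t : ℝ) + δ))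
                - (2 / (N : ℝ)) * (∑ t ∈ Finset.range N,
                    Real.cos (2 * Real.pi * m * ((t : ℝ) - δ) / N) * y t)|
              + |(2 / (N : ℝ)) * (∑ t ∈ Finset.range N,
                    Real.sin (2 * Real.pi * m * t / N) * y ((t : ℝ) + δ))
                - (2 / (N : ℝ)) * (∑ t ∈ Finset.range N,
                    Real.sin (2 * Real.pi * m * ((t : ℝ) - δ) / N) * y t)|))
      Filter.atTop (nhds 0) := by
  have hK := tendsto_const_div_atTop_nhds_zero_nat
    (Lf * (2 * Real.pi * ∑ j ∈ Finset.Icc 1 B, ((j:ℝ) * (|xa j| + |xb j|)))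
      + ∑ m ∈ Finset.Icc 1 B', 4 * (2 * Real.pi * (m:ℝ)
          * (Lf * (|x0| + ∑ j ∈ Finset.Icc 1 B, (|xa j| + |xb j|)))
        + Lf * (2 * Real.pi * ∑ j ∈ Finset.Icc 1 B, ((j:ℝ) * (|xa j| + |xb j|)))))
  refine squeeze_zero' ?_ ?_ hK
  · filter_upwards with N
    dsimp only
    positivity
  · filter_upwards [eventually_ge_atTop 1] with N hN
    dsimp only
    have hNpos : (0:ℝ) < N := by exact_mod_cast hN
    exact equivariance_bound B' N hN δ hδ0 hδ1
      (fun t => f (x0 + ∑ m ∈ Finset.Icc 1 B,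
        (xa m * Real.cos (2 * Real.pi * m * t / N)
          + xb m * Real.sin (2 * Real.pi * m * t / N))))
      (Lf * (|x0| + ∑ j ∈ Finset.Icc 1 B, (|xa j| + |xb j|)))
      (Lf * (2 * Real.pi * ∑ j ∈ Finset.Icc 1 B, ((j:ℝ) * (|xa j| + |xb j|))))
      (by positivity) (by positivity)
      (fun t => by
        have h1 := hf (x0 + ∑ m ∈ Finset.Icc 1 B,
          (xa m * Real.cos (2 * Real.pi * m * t / N)
            + xb m * Real.sin (2 * Real.pi * m * t / N))) 0
        rw [hf0, sub_zero, sub_zero] at h1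
        exact h1.trans (mul_le_mul_of_nonneg_left (x_bound B x0 xa xb N t) hLf))
      (fun t s => by
        have h1 := hf (x0 + ∑ m ∈ Finset.Icc 1 B,
          (xa m * Real.cos (2 * Real.pi * m * t / N)
            + xb m * Real.sin (2 * Real.pi * m * t / N)))
          (x0 + ∑ m ∈ Finset.Icc 1 B,
          (xa m * Real.cos (2 * Real.pi * m * s / N)
            + xb m * Real.sin (2 * Real.pi * m * s / N)))
        have h2 := x_lip B x0 xa xb N hNpos t s
        refine h1.trans ((mul_le_mul_of_nonneg_left h2 hLf).trans (le_of_eq ?_))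
        ring)
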